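/- Let n > 3 be odd and m admissible. The loop L_n(m) is commutative (x·y = y·x for all x, y ∈ L_n(m)) if and only if 2m ≡ 1 (mod n), i.e. m = (n + 1)/2. Moreover m = (n + 1)/2 is admissible, so the class L_n contains exactly one commutative loop. -/

import Mathlib

/-- `m` is admissible for `n`: `0 < m < n`, `gcd(m, n) = 1` and `gcd(m - 1, n) = 1`. -/
def LAdmissible (n m : ℕ) : Prop :=
  0 < m ∧ m < n ∧ Nat.gcd m n = 1 ∧ Nat.gcd (m - 1) n = 1

/-- The product of the loop `L_n(m)`: the carrier is `Option (ZMod n)`, with `none`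
playing the role of the identity `e` and `some i` the element `i ∈ Z_n`.
`e·x = x·e = x`, `i·i = e`, and for `i ≠ j`, `i·j = m·j - (m-1)·i (mod n)`. -/
def lmul (n m : ℕ) : Option (ZMod n) → Option (ZMod n) → Option (ZMod n)
  | none, x => x
  | some i, none => some i
  | some i, some j =>
      if i = j then none
      else some ((m : ZMod n) * j - ((m : ZMod n) - 1) * i)

lemma modeq_iff_half (n m : ℕ) (hn : 3 < n) (hodd : Odd n) (h0 : 0 < m) (h1 : m < n) :
    (2 * m ≡ 1 [MOD n]) ↔ m = (n + 1) / 2 := by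
  obtain ⟨k, hk⟩ := hodd
  constructor
  · intro h
    have h' : 2 * m % n = 1 % n := h
    have hmod : 2 * m % n = 1 := by rw [h']; exact Nat.mod_eq_of_lt (by omega)
    have hd := Nat.div_add_mod (2 * m) n
    rw [hmod] at hd
    have hqlt : 2 * m / n < 2 := Nat.div_lt_of_lt_mul (by omega)
    set q := 2 * m / n with hq
    clear_value q
    interval_cases q <;> omega
  · intro h
    have hm : 2 * m = n + 1 := by omega
    show 2 * m % n = 1 % n
    rw [hm]
    have : (n + 1) % n = 1 % n := by
      conv_lhs => rw [Nat.add_mod, Nat.mod_self]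
      simp
    omega

/-- `L_n(m)` is commutative iff `2m ≡ 1 (mod n)`, iff `m = (n+1)/2`;
moreover `(n+1)/2` is admissible, so `L_n` contains exactly one commutative loop. -/
theorem stmt1 (n : ℕ) (hn : 3 < n) (hodd : Odd n) :
    (∀ m : ℕ, LAdmissible n m →
        ((∀ x y : Option (ZMod n), lmul n m x y = lmul n m y x) ↔ 2 * m ≡ 1 [MOD n])
          ∧ ((2 * m ≡ 1 [MOD n]) ↔ m = (n + 1) / 2))
      ∧ LAdmissible n ((n + 1) / 2) := by
  obtain ⟨k, hk⟩ := hodd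
  haveI : Fact (1 < n) := ⟨by omega⟩
  constructor
  · intro m hm
    obtain ⟨h0, h1, hg1, hg2⟩ := hm
    constructor
    · constructor
      · intro hcomm
        have h01 : (0 : ZMod n) ≠ 1 := zero_ne_one
        have := hcomm (some 0) (some 1)
        simp only [lmul, if_neg h01, if_neg (Ne.symm h01)] at this
        have heq : (m : ZMod n) * 1 - ((m : ZMod n) - 1) * 0
            = (m : ZMod n) * 0 - ((m : ZMod n) - 1) * 1 := by
          exact Option.some.injEq _ _ ▸ (by simpa using this)
        have h2 : (2 * m : ℕ) = ((1 : ℕ) : ZMod n) := by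
          push_cast
          linear_combination heq
        exact (ZMod.natCast_eq_natCast_iff _ _ _).mp h2
      · intro h
        have h2 : ((2 * m : ℕ) : ZMod n) = ((1 : ℕ) : ZMod n) :=
          (ZMod.natCast_eq_natCast_iff _ _ _).mpr h
        push_cast at h2
        intro x y
        match x, y with
        | none, none => rfl
        | none, some j => rfl
        | some i, none => rfl
        | some i, some j =>
          simp only [lmul]
          by_cases hij : i = j
          · rw [if_pos hij, if_pos hij.symm]
          · rw [if_neg hij, if_neg (Ne.symm hij)]
            congr 1
            linear_combination (j - i) * h2
    · exact modeq_iff_half n m hn ⟨k, hk⟩ h0 h1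
  · have hval : (n + 1) / 2 = k + 1 := by omega
    refine ⟨by omega, by omega, ?_, ?_⟩
    · have : 2 * ((n + 1) / 2) ≡ 1 [MOD n] :=
        (modeq_iff_half n ((n + 1) / 2) hn ⟨k, hk⟩ (by omega) (by omega)).mpr rfl
      -- gcd(m, n) = 1 since 2m ≡ 1 mod n
      have h2 : ((2 * ((n + 1) / 2) : ℕ) : ZMod n) = 1 := by
        rw [ZMod.natCast_eq_natCast_iff _ _ _ |>.mpr this]; simp
      have hunit : IsUnit (((n + 1) / 2 : ℕ) : ZMod n) := by
        push_cast at h2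
        exact IsUnit.of_mul_eq_one 2 (by linear_combination h2)
      have := (ZMod.isUnit_iff_coprime ((n + 1) / 2) n).mp hunit
      exact this
    · -- m - 1 = k, and 2k = n - 1 ≡ -1 mod n
      rw [hval]
      simp only [Nat.add_sub_cancel]
      have h2 : ((2 * k : ℕ) : ZMod n) = -1 := by
        have : (2 * k : ℕ) ≡ n - 1 [MOD n] := by
          show (2 * k) % n = (n - 1) % n
          rw [Nat.mod_eq_of_lt (by omega), Nat.mod_eq_of_lt (by omega)]
          omega
        have := (ZMod.natCast_eq_natCast_iff _ _ _).mpr this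
        rw [this]
        rw [Nat.cast_sub (by omega : 1 ≤ n), ZMod.natCast_self, Nat.cast_one]
        ring
      have hunit : IsUnit ((k : ℕ) : ZMod n) := by
        push_cast at h2
        refine IsUnit.of_mul_eq_one (-2) ?_
        linear_combination -h2
      exact (ZMod.isUnit_iff_coprime k n).mp hunit
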